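/- arXiv:2210.04599 — 3 statements merged into one kernel-verified Lean document; each statement's English description precedes it below -/
import Mathlib

section
/- The number of sequences of length d over an alphabet of M symbols with one distinguished symbol σ, such that the sequence uses exactly i distinct symbols other than σ (with σ allowed to appear any number of times, possibly zero), equals ((M-1)!/(M-i-1)!) · S(d + 1, i + 1). -/
def stirling : ℕ → ℕ → ℕ
  | 0, 0 => 1
  | 0, _ + 1 => 0
  | _ + 1, 0 => 0
  | n + 1, k + 1 => (k + 1) * stirling n (k + 1) + stirling n k

section Helper
open Finset



lemma count_x {M : ℕ} (σ : Fin M) (S : Finset (Fin M)) (i : ℕ) :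
    (univ.filter (fun x : Fin M => ((insert x S).erase σ).card = i)).card
    = (if (S.erase σ).card = i then i + 1 else 0)
      + (if (S.erase σ).card + 1 = i then M - i else 0) := by
  set T := S.erase σ with hT
  have hσT : σ ∉ T := Finset.notMem_erase _ _
  have hins : insert σ S = insert σ T := by
    ext y; by_cases hy : y = σ <;> simp [hT, hy]
  have hval : ∀ x : Fin M, ((insert x S).erase σ).card =
      if x ∈ insert σ S then T.card else T.card + 1 := by
    intro x
    by_cases hx : x = σ
    · subst hx; simp [Finset.erase_insert_eq_erase, hT]
    · rw [Finset.erase_insert_of_ne hx]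
      by_cases hxS : x ∈ S
      · have : x ∈ T := Finset.mem_erase.2 ⟨hx, hxS⟩
        rw [← hT, Finset.insert_eq_self.2 this]; simp [hxS]
      · have hxT : x ∉ T := fun h => hxS (Finset.mem_of_mem_erase h)
        rw [← hT, Finset.card_insert_of_notMem hxT]; simp [hx, hxS]
  by_cases h1 : T.card = i
  · have h2 : ¬ (T.card + 1 = i) := by omega
    rw [if_pos h1, if_neg h2]
    have : (univ.filter (fun x : Fin M => ((insert x S).erase σ).card = i)) = insert σ S := by
      ext x
      simp only [mem_filter, mem_univ, true_and, hval x]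
      by_cases hx : x ∈ insert σ S <;> simp [hx] <;> omega
    rw [this, hins, Finset.card_insert_of_notMem hσT, h1]
  · rw [if_neg h1]
    by_cases h2 : T.card + 1 = i
    · rw [if_pos h2]
      have : (univ.filter (fun x : Fin M => ((insert x S).erase σ).card = i)) = (insert σ S)ᶜ := by
        ext x
        simp only [mem_filter, mem_univ, true_and, hval x, Finset.mem_compl]
        by_cases hx : x ∈ insert σ S <;> simp [hx] <;> omega
      rw [this, Finset.card_compl, hins, Finset.card_insert_of_notMem hσT,
        Fintype.card_fin, h2]
      omega
    · rw [if_neg h2]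
      have : (univ.filter (fun x : Fin M => ((insert x S).erase σ).card = i)) = ∅ := by
        ext x
        simp only [mem_filter, mem_univ, true_and, hval x, Finset.notMem_empty, iff_false]
        by_cases hx : x ∈ insert σ S <;> simp [hx] <;> omega
      simp [this]


lemma stirling_succ_succ (n k : ℕ) :
    stirling (n + 1) (k + 1) = (k + 1) * stirling n (k + 1) + stirling n k := rfl

lemma stirling_succ_zero (n : ℕ) : stirling (n + 1) 0 = 0 := rfl

lemma stirling_zero : ∀ k, stirling 0 k = if k = 0 then 1 else 0
  | 0 => rfl
  | _ + 1 => rfl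

def seqEquiv {M d : ℕ} (P : (Fin (d+1) → Fin M) → Prop) :
    {f : Fin (d+1) → Fin M // P f} ≃ Σ g : Fin d → Fin M, {x : Fin M // P (Fin.cons x g)} where
  toFun f := ⟨Fin.tail f.1, f.1 0, by rw [Fin.cons_self_tail]; exact f.2⟩
  invFun p := ⟨Fin.cons p.2.1 p.1, p.2.2⟩
  left_inv f := by simp [Fin.cons_self_tail]
  right_inv p := by
    rcases p with ⟨g, x, h⟩
    simp [Fin.tail_cons]
    rfl

lemma key (M : ℕ) (σ : Fin M) : ∀ d i : ℕ,
    Fintype.card {f : Fin d → Fin M // ((Finset.univ.image f).erase σ).card = i} =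
      (M - 1).descFactorial i * stirling (d + 1) (i + 1) := by
  intro d
  induction d with
  | zero =>
    intro i
    have himg : ∀ f : Fin 0 → Fin M, (univ.image f) = ∅ := by
      intro f; simp
    rw [Fintype.card_subtype]
    rcases i with _ | j
    · simp [himg, stirling_succ_succ, stirling_zero]
    · simp [himg, stirling_succ_succ, stirling_zero]
  | succ d ih =>
    intro i
    have himage : ∀ (x : Fin M) (g : Fin d → Fin M),
        (univ.image (Fin.cons x g : Fin (d+1) → Fin M)) = insert x (univ.image g) := by
      intro x g; ext y; simp [Fin.exists_fin_succ, eq_comm]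
    rw [Fintype.card_congr (seqEquiv _), Fintype.card_sigma]
    have step : ∀ g : Fin d → Fin M,
        Fintype.card {x : Fin M // (((univ.image (Fin.cons x g)).erase σ)).card = i}
        = (if ((univ.image g).erase σ).card = i then i + 1 else 0)
          + (if ((univ.image g).erase σ).card + 1 = i then M - i else 0) := by
      intro g
      rw [Fintype.card_subtype]
      simp_rw [himage]
      exact count_x σ (univ.image g) i
    rw [Finset.sum_congr rfl (fun g _ => step g)]
    rw [Finset.sum_add_distrib, Finset.sum_ite, Finset.sum_ite]
    simp only [Finset.sum_const, Finset.sum_const_zero, smul_eq_mul, add_zero]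
    have hc1 : (univ.filter (fun g : Fin d → Fin M => ((univ.image g).erase σ).card = i)).card
        = Fintype.card {f : Fin d → Fin M // ((univ.image f).erase σ).card = i} :=
      (Fintype.card_subtype _).symm
    rcases i with _ | j
    · have hc2 : (univ.filter (fun g : Fin d → Fin M => ((univ.image g).erase σ).card + 1 = 0)) = ∅ := by
        ext g; simp
      rw [hc2, hc1, ih 0]
      simp [stirling_succ_succ, stirling_succ_zero]
    · have hc2 : (univ.filter (fun g : Fin d → Fin M => ((univ.image g).erase σ).card + 1 = j + 1))
          = (univ.filter (fun g : Fin d → Fin M => ((univ.image g).erase σ).card = j)) := by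
        apply Finset.filter_congr; intro g _; simp
      rw [hc2, hc1, ih (j+1)]
      have hc3 : (univ.filter (fun g : Fin d → Fin M => ((univ.image g).erase σ).card = j)).card
          = Fintype.card {f : Fin d → Fin M // ((univ.image f).erase σ).card = j} :=
        (Fintype.card_subtype _).symm
      rw [hc3, ih j]
      rw [stirling_succ_succ (d+1) (j+1)]
      have hdesc : (M - 1).descFactorial (j + 1) = (M - (j+1)) * (M - 1).descFactorial j := by
        rw [Nat.descFactorial_succ]
        congr 1
        omega
      rw [hdesc]
      ring

end Helper

theorem count_sequences_i_symbols_other_than_sigma (M d i : ℕ) (hM : 1 ≤ M)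
    (hid : i ≤ d) (hiM : i ≤ M - 1) (σ : Fin M) :
    Fintype.card {f : Fin d → Fin M // ((Finset.univ.image f).erase σ).card = i} =
      Nat.factorial (M - 1) / Nat.factorial (M - i - 1) * stirling (d + 1) (i + 1) := by
  rw [key M σ d i, Nat.descFactorial_eq_div hiM]
  congr 3
  omega
end

section
/- In the M/M/1 queue with positive signals (arrival rate α+α⁺ effective births, death rate μ+α⁻), the geometric distribution π(n) = (1-ρ)ρ^n with ρ = (α+α⁺)/(μ+α⁻) fails the quasi-reversibility departure condition for positive-signal departures with constant rate: the triggered positive-signal departure intensity at state n, given by ∑_{n'} π(n') q_{s⁺}^A(n', n) f_{s⁺,s⁺}(n', n) / π(n), equals 0 for n = 0 and ρ⁻¹α⁺ for n ≥ 1, hence is not constant in n. -/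
theorem mm1_positive_signals_not_quasi_reversible (α αp μ αm : ℝ)
    (hα : 0 < α) (hαp : 0 < αp) (hμ : 0 < μ) (hαm : 0 < αm)
    (ρ : ℝ) (hρ : ρ = (α + αp) / (μ + αm)) (hρ1 : ρ < 1)
    (π : ℕ → ℝ) (hπ : ∀ n, π n = (1 - ρ) * ρ ^ n)
    (qA f : ℕ → ℕ → ℝ)
    (hqA : ∀ n n', qA n n' = if n' = n + 1 then αp else 0)
    (hf : ∀ n n', f n n' = if n' = n + 1 then 1 else 0) :
    (∑' n' : ℕ, π n' * qA n' 0 * f n' 0) / π 0 = 0 ∧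
      (∀ n : ℕ, 1 ≤ n → (∑' n' : ℕ, π n' * qA n' n * f n' n) / π n = ρ⁻¹ * αp) ∧
      ¬ ∃ β : ℝ, ∀ n : ℕ, ∑' n' : ℕ, π n' * qA n' n * f n' n = β * π n := by
  have hρpos : 0 < ρ := by
    rw [hρ]; positivity
  have hπpos : ∀ n, 0 < π n := by
    intro n; rw [hπ]; have : 0 < 1 - ρ := by linarith
    positivity
  -- sum at 0 is 0
  have h0 : (∑' n' : ℕ, π n' * qA n' 0 * f n' 0) = 0 := by
    have : ∀ n' : ℕ, π n' * qA n' 0 * f n' 0 = 0 := by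
      intro n'; rw [hqA, hf]
      simp [Nat.succ_ne_zero]
    simp [this]
  -- sum at n ≥ 1
  have hsum : ∀ n : ℕ, 1 ≤ n → (∑' n' : ℕ, π n' * qA n' n * f n' n) = π (n - 1) * αp := by
    intro n hn
    have h1 : (∑' n' : ℕ, π n' * qA n' n * f n' n) = π (n - 1) * qA (n-1) n * f (n-1) n := by
      apply tsum_eq_single
      intro b hb
      rw [hqA, hf]
      have : ¬ (n = b + 1) := by omega
      simp [this]
    rw [h1, hqA, hf]
    have hne : n = (n - 1) + 1 := by omega
    rw [if_pos hne, if_pos hne, mul_one]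
  refine ⟨by rw [h0]; simp, ?_, ?_⟩
  · intro n hn
    rw [hsum n hn, hπ, hπ]
    have hexp : ρ ^ (n - 1) = ρ ^ n / ρ := by
      rw [eq_div_iff (ne_of_gt hρpos), ← pow_succ]
      congr 1; omega
    have h1ρ : (1:ℝ) - ρ ≠ 0 := by linarith
    have hρne : ρ ≠ 0 := ne_of_gt hρpos
    have hρn : ρ ^ n ≠ 0 := pow_ne_zero _ hρne
    rw [hexp]
    field_simp
  · rintro ⟨β, hβ⟩
    have hβ0 : β = 0 := by
      have := hβ 0
      rw [h0] at this
      have := this.symm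
      rcases mul_eq_zero.mp this with h | h
      · exact h
      · exact absurd h (ne_of_gt (hπpos 0))
    have h1 := hβ 1
    rw [hsum 1 le_rfl, hβ0, zero_mul] at h1
    have := mul_pos (hπpos 0) hαp
    exact absurd h1 (ne_of_gt this)
end

section
/- Adding the extra departure rate q_{s⁺}^D(0, 0) = ρ⁻¹α⁺ to the M/M/1 queue with positive signals restores the quasi-reversibility condition for positive-signal departures: for all n ≥ 0, ∑_{n'} π(n')(q_{s⁺}^D(n', n) + q_{s⁺}^A(n', n) f_{s⁺,s⁺}(n', n)) = ρ⁻¹α⁺ · π(n). -/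
theorem mm1_positive_signals_extra_departure_restores_qr (α αp μ αm : ℝ)
    (hα : 0 < α) (hαp : 0 < αp) (hμ : 0 < μ) (hαm : 0 < αm)
    (ρ : ℝ) (hρ : ρ = (α + αp) / (μ + αm)) (hρ1 : ρ < 1)
    (π : ℕ → ℝ) (hπ : ∀ n, π n = (1 - ρ) * ρ ^ n)
    (qA f qD : ℕ → ℕ → ℝ)
    (hqA : ∀ n n', qA n n' = if n' = n + 1 then αp else 0)
    (hf : ∀ n n', f n n' = if n' = n + 1 then 1 else 0)
    (hqD : ∀ n n', qD n n' = if n = 0 ∧ n' = 0 then ρ⁻¹ * αp else 0) :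
    ∀ n : ℕ, ∑' n' : ℕ, π n' * (qD n' n + qA n' n * f n' n) = ρ⁻¹ * αp * π n := by
  have hρ0 : 0 < ρ := by
    rw [hρ]; positivity
  intro n
  match n with
  | 0 =>
    rw [tsum_eq_single 0 (by
      intro b hb
      simp [hqD, hqA, hf, hb])]
    simp [hqD, hqA, hf, hπ]
    ring
  | Nat.succ m =>
    rw [tsum_eq_single m (by
      intro b hb
      have : ¬ (m + 1 = b + 1) := by omega
      simp [hqD, hqA, hf, this, Ne.symm hb])]
    simp [hqD, hqA, hf, hπ]
    field_simp
    ring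
end
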